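/- Define the weight-2 murmuration density 𝓜₂(y) := α·Σ_{r ∈ ℕ, 1 ≤ r ≤ 2√y} ν(r)·√(4y − r²) + β·√y − γ·y for y ≥ 0, and set I(y) := (2/3)·∫_1^2 u·𝓜₂(y/u) du, a := (4/9)(2√2 − 1)·β, b := (2/3)·γ, c := (2/3)·α. Then: (i) for y ∈ [0, 1/4], I(y) = a√y − by; (ii) for y ∈ [1/4, 1/2], I(y) = a√y − by + c·(πy² − (1 − 2y)√(y − 1/4) − 2y²·arcsin(1/(2y) − 1)); (iii) for y ∈ [1/2, 1], I(y) = a√y − by + c·(2y²·(arcsin(1/y − 1) − arcsin(1/(2y) − 1)) − (1 − 2y)√(y − 1/4) + 2(1 − y)√(2y − 1)). -/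

import Mathlib

/-- `α = 2π ∏_p (p⁴ - 2p² - p + 1)/(p⁴ - 2p² + p)`. -/
noncomputable def alphaC : ℝ :=
  2 * Real.pi * ∏' p : Nat.Primes,
    ((((p : ℕ) : ℝ) ^ 4 - 2 * ((p : ℕ) : ℝ) ^ 2 - ((p : ℕ) : ℝ) + 1) /
      (((p : ℕ) : ℝ) ^ 4 - 2 * ((p : ℕ) : ℝ) ^ 2 + ((p : ℕ) : ℝ)))

/-- `β = 2π ∏_p (p³ + p² - 1)/(p (p² + p - 1))`. -/
noncomputable def betaC : ℝ :=
  2 * Real.pi * ∏' p : Nat.Primes,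
    ((((p : ℕ) : ℝ) ^ 3 + ((p : ℕ) : ℝ) ^ 2 - 1) /
      (((p : ℕ) : ℝ) * (((p : ℕ) : ℝ) ^ 2 + ((p : ℕ) : ℝ) - 1)))

/-- `γ = 12 ∏_p p(p+1)/(p² + p - 1)`. -/
noncomputable def gammaC : ℝ :=
  12 * ∏' p : Nat.Primes,
    (((p : ℕ) : ℝ) * (((p : ℕ) : ℝ) + 1) / (((p : ℕ) : ℝ) ^ 2 + ((p : ℕ) : ℝ) - 1))

/-- `ν(r) = ∏_{p prime, p ∣ r} (1 + p² / (p⁴ - 2p² - p + 1))`. -/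
noncomputable def nu (r : ℕ) : ℝ :=
  ∏ p ∈ r.primeFactors,
    (1 + (p : ℝ) ^ 2 / ((p : ℝ) ^ 4 - 2 * (p : ℝ) ^ 2 - (p : ℝ) + 1))

/-- The weight-2 murmuration density
`𝓜₂(y) = α Σ_{1 ≤ r ≤ 2√y} ν(r) √(4y - r²) + β √y - γ y`. -/
noncomputable def M2 (y : ℝ) : ℝ :=
  alphaC * ∑ r ∈ Finset.Icc 1 ⌊2 * Real.sqrt y⌋₊, nu r * Real.sqrt (4 * y - (r : ℝ) ^ 2)
    + betaC * Real.sqrt y - gammaC * y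

/-- `I(y) = (2/3) ∫_1^2 u · 𝓜₂(y/u) du`. -/
noncomputable def Ifun (y : ℝ) : ℝ := (2 / 3) * ∫ u in (1 : ℝ)..2, u * M2 (y / u)

/-- `a = (4/9)(2√2 - 1) β`. -/
noncomputable def aC : ℝ := (4 / 9) * (2 * Real.sqrt 2 - 1) * betaC

/-- `b = (2/3) γ`. -/
noncomputable def bC : ℝ := (2 / 3) * gammaC

/-- `c = (2/3) α`. -/
noncomputable def cC : ℝ := (2 / 3) * alphaC

lemma nu_one : nu 1 = 1 := by simp [nu]

lemma sum_nu_eq {x : ℝ} (hx1 : x ≤ 1) :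
    ∑ r ∈ Finset.Icc 1 ⌊2 * Real.sqrt x⌋₊, nu r * Real.sqrt (4*x - (r:ℝ)^2)
      = if 1/4 ≤ x then Real.sqrt (4*x - 1) else 0 := by
  by_cases h : 1/4 ≤ x
  · rw [if_pos h]
    have hsx : Real.sqrt x ≤ 1 := by
      rw [show (1:ℝ) = Real.sqrt 1 by simp]
      exact Real.sqrt_le_sqrt hx1
    have hs1 : (1:ℝ) ≤ 2 * Real.sqrt x := by
      have : Real.sqrt (1/4) ≤ Real.sqrt x := Real.sqrt_le_sqrt h
      rw [show (1/4:ℝ) = (1/2)^2 by norm_num, Real.sqrt_sq (by norm_num)] at this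
      linarith
    have hn1 : 1 ≤ ⌊2 * Real.sqrt x⌋₊ := Nat.le_floor (by exact_mod_cast hs1)
    have hn2 : ⌊2 * Real.sqrt x⌋₊ ≤ 2 := by
      have : (2:ℝ) * Real.sqrt x ≤ 2 := by linarith
      calc ⌊2 * Real.sqrt x⌋₊ ≤ ⌊(2:ℝ)⌋₊ := Nat.floor_le_floor this
        _ = 2 := by norm_num
    interval_cases h2 : ⌊2 * Real.sqrt x⌋₊
    · rw [show Finset.Icc 1 1 = {1} from rfl]
      simp [nu_one]
    · have hx : x = 1 := by
        have h22 : (2:ℝ) ≤ 2 * Real.sqrt x := by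
          have := (Nat.le_floor_iff (by positivity : (0:ℝ) ≤ 2 * Real.sqrt x)).mp h2.ge
          exact_mod_cast this
        have h1 : (1:ℝ) ≤ Real.sqrt x := by linarith
        have := Real.sq_sqrt (by linarith [Real.sqrt_nonneg x] : (0:ℝ) ≤ x)
        nlinarith [Real.sq_sqrt (show (0:ℝ) ≤ x by nlinarith [Real.sqrt_nonneg x])]
      subst hx
      rw [show Finset.Icc 1 2 = {1, 2} from rfl]
      rw [Finset.sum_insert (by decide), Finset.sum_singleton]
      norm_num [nu_one]
  · rw [if_neg h]
    have hx4 : x < 1/4 := lt_of_not_ge h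
    have : Real.sqrt x < 1/2 := by
      rcases le_or_gt x 0 with h0 | h0
      · rw [Real.sqrt_eq_zero_of_nonpos h0]; norm_num
      · rw [show (1/2:ℝ) = Real.sqrt ((1/2)^2) from (Real.sqrt_sq (by norm_num)).symm]
        exact Real.sqrt_lt_sqrt h0.le (by norm_num; linarith)
    have : ⌊2 * Real.sqrt x⌋₊ = 0 := Nat.floor_eq_zero.mpr (by linarith)
    rw [this]
    simp

lemma uM2_eq {y u : ℝ} (hy0 : 0 ≤ y) (hy1 : y ≤ 1) (hu : u ∈ Set.uIcc (1:ℝ) 2) :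
    u * M2 (y/u) = alphaC * Real.sqrt (4*y*u - u^2)
      + betaC * (Real.sqrt u * Real.sqrt y) - gammaC * y := by
  rw [Set.uIcc_of_le (by norm_num)] at hu
  have hu1 : (1:ℝ) ≤ u := hu.1
  have hu0 : (0:ℝ) < u := by linarith
  have hx1 : y/u ≤ 1 := by
    rw [div_le_one hu0]; linarith
  have M2_eq : M2 (y/u) = alphaC * (if 1/4 ≤ y/u then Real.sqrt (4*(y/u) - 1) else 0)
      + betaC * Real.sqrt (y/u) - gammaC * (y/u) := by
    unfold M2
    rw [sum_nu_eq hx1]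
  rw [M2_eq]
  have h1 : u * (if 1/4 ≤ y/u then Real.sqrt (4*(y/u) - 1) else 0)
      = Real.sqrt (4*y*u - u^2) := by
    by_cases h : 1/4 ≤ y/u
    · rw [if_pos h]
      have h4 : u ≤ 4*y := by
        rw [le_div_iff₀ hu0] at h; linarith
      rw [show 4*y*u - u^2 = u^2 * (4*(y/u) - 1) by field_simp,
        Real.sqrt_mul (by positivity), Real.sqrt_sq hu0.le]
    · rw [if_neg h]
      have h4 : 4*y < u := by
        rw [not_le, div_lt_iff₀ hu0] at h; linarith
      rw [Real.sqrt_eq_zero_of_nonpos (by nlinarith)]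
      ring
  have hsu : Real.sqrt u * Real.sqrt u = u := Real.mul_self_sqrt hu0.le
  have h2 : u * Real.sqrt (y/u) = Real.sqrt u * Real.sqrt y := by
    rw [Real.sqrt_div hy0]
    field_simp
    linear_combination (-1 : ℝ) * Real.sqrt y * hsu
  have h3 : u * (y/u) = y := by field_simp
  calc u * (alphaC * (if 1/4 ≤ y/u then Real.sqrt (4*(y/u) - 1) else 0)
        + betaC * Real.sqrt (y/u) - gammaC * (y/u))
      = alphaC * (u * (if 1/4 ≤ y/u then Real.sqrt (4*(y/u) - 1) else 0))
        + betaC * (u * Real.sqrt (y/u)) - gammaC * (u * (y/u)) := by ring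
    _ = _ := by rw [h1, h2, h3]

noncomputable def Ffun (y u : ℝ) : ℝ :=
  ((u - 2*y) * Real.sqrt (4*y*u - u^2) + 4*y^2 * Real.arcsin ((u - 2*y)/(2*y))) / 2

lemma hasDerivAt_Ffun {y u : ℝ} (hy : 0 < y) (h0 : 0 < u) (h4 : u < 4*y) :
    HasDerivAt (Ffun y) (Real.sqrt (4*y*u - u^2)) u := by
  have hpos : 0 < 4*y*u - u^2 := by nlinarith
  set s := Real.sqrt (4*y*u - u^2) with hs
  have hspos : 0 < s := Real.sqrt_pos.mpr hpos
  have hs2 : s^2 = 4*y*u - u^2 := Real.sq_sqrt hpos.le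
  have hq : HasDerivAt (fun u : ℝ => 4*y*u - u^2) (4*y - 2*u) u := by
    exact (((hasDerivAt_id u).const_mul (4*y)).sub (hasDerivAt_pow 2 u)).congr_deriv (by norm_num)
  have hsd : HasDerivAt (fun u : ℝ => Real.sqrt (4*y*u - u^2))
      (1 / (2*s) * (4*y - 2*u)) u :=
    (Real.hasDerivAt_sqrt hpos.ne').comp u hq
  have hl : HasDerivAt (fun u : ℝ => (u - 2*y)/(2*y)) (1/(2*y)) u := by
    have := ((hasDerivAt_id u).sub_const (2*y)).div_const (2*y)
    simpa using this
  have harg1 : (u - 2*y)/(2*y) ≠ -1 := by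
    intro hE
    rw [div_eq_iff (by linarith : (2:ℝ)*y ≠ 0)] at hE
    nlinarith
  have harg2 : (u - 2*y)/(2*y) ≠ 1 := by
    intro hE
    rw [div_eq_iff (by linarith : (2:ℝ)*y ≠ 0)] at hE
    nlinarith
  have hsq1 : Real.sqrt (1 - ((u - 2*y)/(2*y))^2) = s / (2*y) := by
    rw [show 1 - ((u - 2*y)/(2*y))^2 = (4*y*u - u^2) / (2*y)^2 by field_simp; ring]
    rw [Real.sqrt_div hpos.le, Real.sqrt_sq (by linarith)]
  have ha : HasDerivAt (fun u : ℝ => Real.arcsin ((u - 2*y)/(2*y)))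
      (1 / Real.sqrt (1 - ((u - 2*y)/(2*y))^2) * (1/(2*y))) u :=
    by have := (Real.hasDerivAt_arcsin harg1 harg2).comp u hl; exact this
  rw [hsq1] at ha
  have hfull := (((hasDerivAt_id u).sub_const (2*y)).mul hsd).add (ha.const_mul (4*y^2))
  have := hfull.div_const 2
  refine this.congr_deriv (Eq.symm ?_)
  rw [← hs]
  simp only [id]
  clear_value s
  have h2y : (2*y) ≠ 0 := by positivity
  field_simp
  linear_combination 2 * hs2

lemma continuous_Ffun (y : ℝ) : Continuous (Ffun y) := by
  unfold Ffun
  exact (((continuous_id.sub continuous_const).mul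
    (Real.continuous_sqrt.comp (by fun_prop))).add
    (continuous_const.mul (Real.continuous_arcsin.comp (by fun_prop)))).div_const 2

lemma integral_part (y b : ℝ) (hy : 0 < y) (h1b : 1 ≤ b) (hb : b ≤ 4*y) :
    ∫ u in (1:ℝ)..b, Real.sqrt (4*y*u - u^2) = Ffun y b - Ffun y 1 := by
  apply intervalIntegral.integral_eq_sub_of_hasDeriv_right_of_le h1b
    ((continuous_Ffun y).continuousOn)
  · intro x hx
    exact (hasDerivAt_Ffun hy (by linarith [hx.1]) (by linarith [hx.2])).hasDerivWithinAt
  · apply Continuous.intervalIntegrable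
    exact Real.continuous_sqrt.comp (by fun_prop)

lemma integral_sqrtu : ∫ u in (1:ℝ)..2, Real.sqrt u = (2/3) * (2 * Real.sqrt 2 - 1) := by
  simp only [Real.sqrt_eq_rpow]
  rw [integral_rpow (Or.inl (by norm_num))]
  rw [show (1:ℝ)/2 + 1 = 1 + 1/2 by norm_num, Real.rpow_add two_pos, Real.rpow_one,
    ← Real.sqrt_eq_rpow, Real.one_rpow]
  ring

lemma Ffun_one {y : ℝ} (hy : 0 < y) :
    Ffun y 1 = ((1 - 2*y) * (2 * Real.sqrt (y - 1/4))
      + 4*y^2 * Real.arcsin (1/(2*y) - 1)) / 2 := by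
  unfold Ffun
  rw [show 4*y*1 - 1^2 = 4 * (y - 1/4) by ring, Real.sqrt_mul (by norm_num),
    show Real.sqrt 4 = 2 by rw [show (4:ℝ) = 2^2 by norm_num, Real.sqrt_sq (by norm_num)],
    show (1 - 2*y)/(2*y) = 1/(2*y) - 1 by field_simp]

lemma Ffun_two {y : ℝ} (hy : 0 < y) :
    Ffun y 2 = ((2 - 2*y) * (2 * Real.sqrt (2*y - 1))
      + 4*y^2 * Real.arcsin (1/y - 1)) / 2 := by
  unfold Ffun
  rw [show 4*y*2 - 2^2 = 4 * (2*y - 1) by ring, Real.sqrt_mul (by norm_num),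
    show Real.sqrt 4 = 2 by rw [show (4:ℝ) = 2^2 by norm_num, Real.sqrt_sq (by norm_num)],
    show (2 - 2*y)/(2*y) = 1/y - 1 by field_simp]

lemma Ffun_fourY {y : ℝ} (hy : 0 < y) : Ffun y (4*y) = Real.pi * y^2 := by
  unfold Ffun
  rw [show 4*y*(4*y) - (4*y)^2 = 0 by ring, Real.sqrt_zero,
    show (4*y - 2*y)/(2*y) = 1 by field_simp; ring, Real.arcsin_one]
  ring


lemma sqrt_cont (y : ℝ) : Continuous (fun u : ℝ => Real.sqrt (4*y*u - u^2)) :=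
  Real.continuous_sqrt.comp (by fun_prop)

lemma Ifun_eq {y : ℝ} (hy0 : 0 ≤ y) (hy1 : y ≤ 1) :
    Ifun y = (2/3) * alphaC * (∫ u in (1:ℝ)..2, Real.sqrt (4*y*u - u^2))
      + aC * Real.sqrt y - bC * y := by
  unfold Ifun
  rw [intervalIntegral.integral_congr (fun u hu => uM2_eq hy0 hy1 hu)]
  have hA : IntervalIntegrable (fun u : ℝ => alphaC * Real.sqrt (4*y*u - u^2))
      MeasureTheory.volume 1 2 :=
    (continuous_const.mul (sqrt_cont y)).intervalIntegrable 1 2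
  have hB : IntervalIntegrable (fun u : ℝ => betaC * (Real.sqrt u * Real.sqrt y))
      MeasureTheory.volume 1 2 :=
    (continuous_const.mul (Real.continuous_sqrt.mul continuous_const)).intervalIntegrable 1 2
  have hC : IntervalIntegrable (fun _ : ℝ => gammaC * y) MeasureTheory.volume 1 2 :=
    intervalIntegrable_const
  rw [intervalIntegral.integral_sub (hA.add hB) hC, intervalIntegral.integral_add hA hB,
    intervalIntegral.integral_const_mul]
  have hBint : (∫ u in (1:ℝ)..2, betaC * (Real.sqrt u * Real.sqrt y))
      = betaC * Real.sqrt y * ((2/3) * (2 * Real.sqrt 2 - 1)) := by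
    simp_rw [show ∀ u : ℝ, betaC * (Real.sqrt u * Real.sqrt y)
      = (betaC * Real.sqrt y) * Real.sqrt u from fun u => by ring]
    rw [intervalIntegral.integral_const_mul, integral_sqrtu]
  rw [hBint, intervalIntegral.integral_const, smul_eq_mul]
  unfold aC bC
  ring

theorem stmt18 :
    (∀ y ∈ Set.Icc (0 : ℝ) (1 / 4), Ifun y = aC * Real.sqrt y - bC * y) ∧
    (∀ y ∈ Set.Icc (1 / 4 : ℝ) (1 / 2),
      Ifun y = aC * Real.sqrt y - bC * y +
        cC * (Real.pi * y ^ 2 - (1 - 2 * y) * Real.sqrt (y - 1 / 4) -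
          2 * y ^ 2 * Real.arcsin (1 / (2 * y) - 1))) ∧
    (∀ y ∈ Set.Icc (1 / 2 : ℝ) 1,
      Ifun y = aC * Real.sqrt y - bC * y +
        cC * (2 * y ^ 2 * (Real.arcsin (1 / y - 1) - Real.arcsin (1 / (2 * y) - 1)) -
          (1 - 2 * y) * Real.sqrt (y - 1 / 4) + 2 * (1 - y) * Real.sqrt (2 * y - 1))) := by
  refine ⟨?_, ?_, ?_⟩ <;> intro y hy <;> obtain ⟨hyl, hyr⟩ := hy
  · rw [Ifun_eq hyl (by linarith)]
    have hz : (∫ u in (1:ℝ)..2, Real.sqrt (4*y*u - u^2)) = 0 := by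
      rw [intervalIntegral.integral_congr (g := fun _ => (0:ℝ))
        (fun u hu => by
          rw [Set.uIcc_of_le (by norm_num)] at hu
          exact Real.sqrt_eq_zero_of_nonpos (by nlinarith [hu.1, hu.2]))]
      simp
    rw [hz]
    ring
  · have hy0 : (0:ℝ) < y := by linarith
    rw [Ifun_eq (by linarith) (by linarith)]
    have hsplit : (∫ u in (1:ℝ)..2, Real.sqrt (4*y*u - u^2))
        = (∫ u in (1:ℝ)..(4*y), Real.sqrt (4*y*u - u^2))
          + ∫ u in (4*y)..2, Real.sqrt (4*y*u - u^2) :=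
      (intervalIntegral.integral_add_adjacent_intervals
        ((sqrt_cont y).intervalIntegrable 1 (4*y))
        ((sqrt_cont y).intervalIntegrable (4*y) 2)).symm
    have h2z : (∫ u in (4*y)..2, Real.sqrt (4*y*u - u^2)) = 0 := by
      rw [intervalIntegral.integral_congr (g := fun _ => (0:ℝ))
        (fun u hu => by
          rw [Set.uIcc_of_le (by linarith)] at hu
          exact Real.sqrt_eq_zero_of_nonpos (by nlinarith [hu.1, hu.2]))]
      simp
    rw [hsplit, h2z, integral_part y (4*y) hy0 (by linarith) le_rfl,
      Ffun_fourY hy0, Ffun_one hy0]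
    unfold cC
    ring
  · have hy0 : (0:ℝ) < y := by linarith
    rw [Ifun_eq (by linarith) hyr,
      integral_part y 2 hy0 (by norm_num) (by linarith),
      Ffun_two hy0, Ffun_one hy0]
    unfold cC
    ring
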